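/- Let A be a uniform algebra, θ : A → Mₙ(ℂ) a continuous unital homomorphism, and α : A → A a unital antilinear contraction. If the map θ_α(f) = (θ(f) + θ(α(f))*)/2 is a contraction, then for every f ∈ A the numerical range of θ_α(f) is contained in the convex hull of the spectrum of f. -/

import Mathlib

open scoped InnerProductSpace




lemma sum_extend_emb {ι κ M : Type*} [Fintype ι] [Fintype κ] [AddCommMonoid M] [DecidableEq κ]
    (e : ι ↪ κ) (F : ι → M) : ∑ j, Function.extend ⇑e F 0 j = ∑ i, F i := by
  classical
  calc ∑ j, Function.extend ⇑e F 0 j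
      = ∑ j ∈ Finset.univ.image ⇑e, Function.extend ⇑e F 0 j := by
        symm
        apply Finset.sum_subset (Finset.subset_univ _)
        intro j _ hj
        have h : ¬∃ i, e i = j := fun ⟨i, hi⟩ =>
          hj (Finset.mem_image.2 ⟨i, Finset.mem_univ _, hi⟩)
        simp [Function.extend_apply' _ _ _ h]
    _ = ∑ i, Function.extend ⇑e F 0 (e i) :=
        Finset.sum_image (fun a _ b _ h => e.injective h)
    _ = ∑ i, F i := by simp [e.injective.extend_apply]

lemma myIsCompact_convexHull {K : Set ℂ} (hK : IsCompact K) :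
    IsCompact (convexHull ℝ K) := by
  rcases K.eq_empty_or_nonempty with rfl | hne
  · simp
  · have hS : IsCompact ((stdSimplex ℝ (Fin 3)) ×ˢ Set.univ.pi (fun _ : Fin 3 => K)) :=
      (isCompact_stdSimplex _ _).prod (isCompact_univ_pi fun _ => hK)
    have hg : Continuous (fun p : (Fin 3 → ℝ) × (Fin 3 → ℂ) => ∑ i, p.1 i • p.2 i) := by
      fun_prop
    have himg : (fun p : (Fin 3 → ℝ) × (Fin 3 → ℂ) => ∑ i, p.1 i • p.2 i) ''
        ((stdSimplex ℝ (Fin 3)) ×ˢ Set.univ.pi (fun _ : Fin 3 => K)) = convexHull ℝ K := by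
      apply Set.Subset.antisymm
      · rintro x ⟨⟨c, z⟩, ⟨hc, hz⟩, rfl⟩
        exact (convex_convexHull ℝ K).sum_mem (fun i _ => hc.1 i) hc.2
          (fun i _ => subset_convexHull ℝ K (hz i (Set.mem_univ i)))
      · intro x hx
        obtain ⟨ι, hfin, z, w, hrange, hindep, hpos, hsum1, hsumx⟩ :=
          eq_pos_convex_span_of_mem_convexHull hx
        have hne' : Nonempty ι := by
          by_contra h
          rw [not_nonempty_iff] at h
          simp at hsum1
        obtain ⟨i₀⟩ := hne'
        have hcard : Fintype.card ι ≤ Fintype.card (Fin 3) := by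
          have h1 := hindep.card_le_finrank_succ
          have h2 : Module.finrank ℝ (vectorSpan ℝ (Set.range z)) ≤ Module.finrank ℝ ℂ :=
            Submodule.finrank_le _
          simp only [Complex.finrank_real_complex] at h2
          simpa using h1.trans (by omega)
        obtain ⟨e⟩ := Function.Embedding.nonempty_of_card_le hcard
        classical
        set c : Fin 3 → ℝ := Function.extend ⇑e w 0 with hc
        set zz : Fin 3 → ℂ := Function.extend ⇑e z (fun _ => z i₀) with hzz
        have hcz : ∀ j : Fin 3, c j • zz j = Function.extend ⇑e (fun i => w i • z i) 0 j := by
          intro j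
          by_cases h : ∃ i, e i = j
          · obtain ⟨i, rfl⟩ := h
            simp [hc, hzz, e.injective.extend_apply]
          · simp [hc, hzz, Function.extend_apply' _ _ _ h]
        refine ⟨(c, zz), ⟨⟨fun j => ?_, ?_⟩, fun j _ => ?_⟩, ?_⟩
        · by_cases h : ∃ i, e i = j
          · obtain ⟨i, rfl⟩ := h
            simp only [hc, e.injective.extend_apply]
            exact (hpos i).le
          · simp [hc, Function.extend_apply' _ _ _ h]
        · rw [hc]; rw [sum_extend_emb e w]; exact hsum1
        · by_cases h : ∃ i, e i = j
          · obtain ⟨i, rfl⟩ := h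
            simp only [hzz, e.injective.extend_apply]
            exact hrange (Set.mem_range_self i)
          · simp only [hzz, Function.extend_apply' _ _ _ h]
            exact hrange (Set.mem_range_self i₀)
        · simp only
          calc ∑ j, c j • zz j = ∑ j, Function.extend ⇑e (fun i => w i • z i) 0 j := by
                exact Finset.sum_congr rfl fun j _ => hcz j
            _ = ∑ i, w i • z i := sum_extend_emb e _
            _ = x := hsumx
    rw [← himg]
    exact hS.image hg



open Complex in
lemma mem_convexHull_of_dist_le {K : Set ℂ} (hK : IsCompact K) (w : ℂ)
    (H : ∀ l : ℂ, ∃ z ∈ K, dist w l ≤ dist z l) : w ∈ convexHull ℝ K := by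
  by_contra hw
  obtain ⟨ℓ, u, hu, huw⟩ := geometric_hahn_banach_closed_point
    (convex_convexHull ℝ K) (myIsCompact_convexHull hK).isClosed hw
  set a : ℝ := ℓ 1 with ha
  set b : ℝ := ℓ Complex.I with hb
  have hrep : ∀ z : ℂ, ℓ z = a * z.re + b * z.im := by
    intro z
    have hz : (z.re : ℝ) • (1 : ℂ) + (z.im : ℝ) • Complex.I = z := by
      simp [Complex.real_smul, Complex.re_add_im]
    calc ℓ z = ℓ (z.re • (1:ℂ) + z.im • Complex.I) := by rw [hz]
      _ = a * z.re + b * z.im := by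
          rw [map_add, map_smul, map_smul, smul_eq_mul, smul_eq_mul]; ring
  obtain ⟨R, hR⟩ := (hK.isBounded).subset_closedBall w
  have hε : 0 < ℓ w - u := by linarith
  obtain ⟨M, hMpos, hM2⟩ : ∃ M : ℝ, 0 < M ∧ 2 * M * (ℓ w - u) = R ^ 2 + 1 :=
    ⟨(R ^ 2 + 1) / (2 * (ℓ w - u)), by positivity, by field_simp⟩
  set lam : ℂ := w - (M : ℂ) * ((a : ℂ) + (b : ℂ) * Complex.I) with hlam
  obtain ⟨z, hzK, hdist⟩ := H lam
  have hz_lt : ℓ z < u := hu z (subset_convexHull ℝ K hzK)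
  have hzw : dist z w ≤ R := by
    have := hR hzK
    rwa [Metric.mem_closedBall] at this
  have hsq : dist w lam ^ 2 ≤ dist z lam ^ 2 := by
    apply pow_le_pow_left₀ dist_nonneg hdist
  have e1 : dist w lam ^ 2 = M ^ 2 * normSq ((a : ℂ) + (b : ℂ) * Complex.I) := by
    have h1 : w - lam = (M : ℂ) * ((a : ℂ) + (b : ℂ) * Complex.I) := by rw [hlam]; ring
    rw [Complex.dist_eq, h1, Complex.sq_norm, Complex.normSq_mul, Complex.normSq_ofReal]
    ring
  have e2 : dist z lam ^ 2 = normSq (z - w) + M ^ 2 * normSq ((a : ℂ) + (b : ℂ) * Complex.I)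
      + 2 * (M * (ℓ z - ℓ w)) := by
    have h1 : z - lam = (z - w) + (M : ℂ) * ((a : ℂ) + (b : ℂ) * Complex.I) := by
      rw [hlam]; ring
    have h2 : ((z - w) * (starRingEnd ℂ) ((M : ℂ) * ((a : ℂ) + (b : ℂ) * Complex.I))).re
        = M * (ℓ z - ℓ w) := by
      rw [hrep z, hrep w]
      simp [Complex.mul_re, Complex.mul_im, Complex.sub_re, Complex.sub_im]
      ring
    rw [Complex.dist_eq, h1, Complex.sq_norm, Complex.normSq_add, h2, Complex.normSq_mul,
      Complex.normSq_ofReal]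
    ring
  have hnorm : normSq (z - w) ≤ R ^ 2 := by
    rw [← Complex.sq_norm, ← Complex.dist_eq]
    exact pow_le_pow_left₀ dist_nonneg hzw 2
  rw [e1, e2] at hsq
  have h3 : 2 * M * (ℓ w - u) ≤ 2 * M * (ℓ w - ℓ z) := by nlinarith
  linarith




set_option maxHeartbeats 1000000 in
set_option synthInstance.maxHeartbeats 400000 in
/-- Lemma: under the hypotheses of the projection theorem (uniform algebra `A`,
continuous unital homomorphism `θ : A → Mₙ(ℂ)`, unital antilinear contraction
`α` with `θ_α = (θ(·) + θ(α(·))*)/2` a contraction), the numerical range of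
`θ_α(f)` is contained in the convex hull of the spectrum of `f`. -/
theorem stmt_7 {X : Type*} [TopologicalSpace X] [CompactSpace X] [T2Space X]
    (A : Subalgebra ℂ C(X, ℂ)) (hA : IsClosed (A : Set C(X, ℂ)))
    {n : ℕ}
    (θ : ↥A →ₐ[ℂ] (EuclideanSpace ℂ (Fin n) →L[ℂ] EuclideanSpace ℂ (Fin n)))
    (hθ : Continuous θ)
    (α : ↥A →ₛₗ[starRingEnd ℂ] ↥A) (hα1 : α 1 = 1) (hα : ∀ f, ‖α f‖ ≤ ‖f‖)
    (hcontr : ∀ f : A, ‖θ f + star (θ (α f))‖ ≤ 2 * ‖f‖) :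
    ∀ f : A, ∀ x : EuclideanSpace ℂ (Fin n), ‖x‖ = 1 →
      ⟪x, ((2 : ℂ)⁻¹ • (θ f + star (θ (α f)))) x⟫_ℂ
        ∈ convexHull ℝ (spectrum ℂ f) := by
  intro f x hx
  haveI : CompleteSpace ↥A := hA.completeSpace_coe
  rcases isEmpty_or_nonempty X with hX | hX
  · -- trivial algebra: contradiction with ‖x‖ = 1
    exfalso
    have h10 : ((1 : ↥A) : C(X, ℂ)) = 0 := ContinuousMap.ext fun p => hX.elim p
    have hn1 : ‖(1 : ↥A)‖ = 0 := by
      have : ‖(1 : ↥A)‖ = ‖((1 : ↥A) : C(X, ℂ))‖ := rfl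
      rw [this, h10, norm_zero]
    have hc := hcontr 1
    rw [hn1, map_one, hα1, map_one, star_one] at hc
    have h2 := ContinuousLinearMap.le_opNorm
      ((1 : EuclideanSpace ℂ (Fin n) →L[ℂ] EuclideanSpace ℂ (Fin n)) + 1) x
    have h3 : ((1 : EuclideanSpace ℂ (Fin n) →L[ℂ] EuclideanSpace ℂ (Fin n)) + 1) x
        = (2 : ℂ) • x := by
      simp [two_smul]
    rw [h3, norm_smul, hx] at h2
    have h4 : ‖(2 : ℂ)‖ = 2 := by norm_num
    rw [h4] at h2
    have h5 := norm_nonneg ((1 : EuclideanSpace ℂ (Fin n) →L[ℂ] EuclideanSpace ℂ (Fin n)) + 1)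
    nlinarith [hc, h2]
  · apply mem_convexHull_of_dist_le (spectrum.isCompact (𝕜 := ℂ) f)
    intro l
    obtain ⟨g, hg⟩ : ∃ g : ↥A, g = f - l • 1 := ⟨_, rfl⟩
    -- the value of θ_α at g
    have hθg : θ g + star (θ (α g)) = (θ f + star (θ (α f)))
        - ((2 * l) • (1 : EuclideanSpace ℂ (Fin n) →L[ℂ] EuclideanSpace ℂ (Fin n))) := by
      have h1 : θ g = θ f - l • 1 := by
        rw [hg, map_sub, map_smul, map_one]
      have h2 : α g = α f - (starRingEnd ℂ l) • 1 := by
        rw [hg, LinearMap.map_sub, LinearMap.map_smulₛₗ, hα1]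
      rw [h1, h2, map_sub, map_smul, map_one,
        star_sub (θ (α f)) (((starRingEnd ℂ) l) •
          (1 : EuclideanSpace ℂ (Fin n) →L[ℂ] EuclideanSpace ℂ (Fin n))),
        star_smul ((starRingEnd ℂ) l)
          (1 : EuclideanSpace ℂ (Fin n) →L[ℂ] EuclideanSpace ℂ (Fin n)),
        star_one]
      have hll : star ((starRingEnd ℂ) l) = l := Complex.conj_conj l
      rw [hll, two_mul, add_smul l l (1 : EuclideanSpace ℂ (Fin n) →L[ℂ] EuclideanSpace ℂ (Fin n))]
      abel
    -- inner product identity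
    have hxx : ⟪x, x⟫_ℂ = 1 := by
      rw [inner_self_eq_norm_sq_to_K, hx]
      norm_num
    have hval : ⟪x, ((2 : ℂ)⁻¹ • (θ g + star (θ (α g)))) x⟫_ℂ
        = ⟪x, ((2 : ℂ)⁻¹ • (θ f + star (θ (α f)))) x⟫_ℂ - l := by
      rw [hθg]
      simp only [smul_sub, ContinuousLinearMap.sub_apply, ContinuousLinearMap.smul_apply,
        ContinuousLinearMap.one_apply, inner_sub_right, inner_smul_right, hxx]
      ring
    -- numerical range bound
    have h2i : ‖(2 : ℂ)⁻¹‖ = 2⁻¹ := by norm_num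
    have hbound : ‖⟪x, ((2 : ℂ)⁻¹ • (θ g + star (θ (α g)))) x⟫_ℂ‖ ≤ ‖g‖ := by
      calc ‖⟪x, ((2 : ℂ)⁻¹ • (θ g + star (θ (α g)))) x⟫_ℂ‖
          ≤ ‖x‖ * ‖((2 : ℂ)⁻¹ • (θ g + star (θ (α g)))) x‖ := norm_inner_le_norm _ _
        _ = ‖(2 : ℂ)⁻¹ • ((θ g + star (θ (α g))) x)‖ := by
            rw [hx, one_mul, ContinuousLinearMap.smul_apply]
        _ = 2⁻¹ * ‖(θ g + star (θ (α g))) x‖ := by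
            rw [norm_smul, h2i]
        _ ≤ 2⁻¹ * (‖θ g + star (θ (α g))‖ * ‖x‖) := by
            gcongr
            exact ContinuousLinearMap.le_opNorm _ x
        _ = 2⁻¹ * ‖θ g + star (θ (α g))‖ := by rw [hx, mul_one]
        _ ≤ 2⁻¹ * (2 * ‖g‖) := by
            gcongr
            exact hcontr g
        _ = ‖g‖ := by ring
    -- find a point where the sup norm is attained
    have hcont : Continuous fun p : X => ‖(g : C(X, ℂ)) p‖ :=
      ((g : C(X, ℂ)).continuous).norm
    obtain ⟨x0, hx0⟩ := hcont.exists_forall_ge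
      (by rw [Filter.cocompact_eq_bot]; exact Filter.tendsto_bot)
    have hgnorm : ‖g‖ ≤ ‖(g : C(X, ℂ)) x0‖ := by
      have : ‖g‖ = ‖(g : C(X, ℂ))‖ := rfl
      rw [this]
      exact (ContinuousMap.norm_le _ (norm_nonneg _)).2 fun p => hx0 p
    -- the value of g at x0
    have hgval : (g : C(X, ℂ)) x0 = (f : C(X, ℂ)) x0 - l := by
      rw [hg]
      push_cast
      simp
    -- f x0 belongs to the spectrum
    have hspec : (f : C(X, ℂ)) x0 ∈ spectrum ℂ f := by
      rw [spectrum.mem_iff]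
      intro hunit
      obtain ⟨b', hb'⟩ := hunit.exists_right_inv
      have hev := congrArg (fun h : ↥A => ((h : C(X, ℂ)) x0)) hb'
      simp at hev
    refine ⟨(f : C(X, ℂ)) x0, hspec, ?_⟩
    calc dist (⟪x, ((2 : ℂ)⁻¹ • (θ f + star (θ (α f)))) x⟫_ℂ) l
        = ‖⟪x, ((2 : ℂ)⁻¹ • (θ g + star (θ (α g)))) x⟫_ℂ‖ := by
          rw [dist_eq_norm, hval]
      _ ≤ ‖g‖ := hbound
      _ ≤ ‖(g : C(X, ℂ)) x0‖ := hgnorm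
      _ = dist ((f : C(X, ℂ)) x0) l := by rw [hgval, dist_eq_norm]
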